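/- Let X¹ ⊆ X² ⊆ ⋯ be an increasing sequence of Polish spaces such that each inclusion X^i → X^{i+1} is a homeomorphism onto a closed subset, let X = ⋃_n X^n with the final (direct-limit) topology, and let ℬ_X be the σ-algebra of sets B ⊆ X with B ∩ X^i Borel in X^i for every i. Assume each X^i possesses a countable set Φ^i of bounded continuous real-valued functions separating points of X^i. Let Ω^i = C([0,∞) → X^i) with the compact-open topology, Ω the direct limit of the Ω^i, θ_s the shift, and ⋈_s the splicing of paths. Suppose S : X → 2^Ω satisfies: (S1) S(x) is a nonempty compact subset of Ω_x = {w ∈ Ω : w(0) = x} for every x; (S2) {x ∈ X : S(x) ∩ C ≠ ∅} ∈ ℬ_X for every closed C ⊆ Ω; (S3) if w ∈ S(x) and s ≥ 0 then θ_s w ∈ S(w(s)); (S4) if w ∈ S(x) and v ∈ S(w(s)) then w ⋈_s v ∈ S(x); and additionally, for every i there is an integer k_i ≥ i with S(X^i) ⊆ Ω^{k_i}. Then S has a measurable selection 𝔲 with the semigroup property 𝔲(t₂, 𝔲(t₁, x)) = 𝔲(t₁ + t₂, x) for all t₁, t₂ ≥ 0 and all x ∈ X. -/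

import Mathlib

open MeasureTheory Set
open scoped NNReal

noncomputable section

/-- The space `Ω = C([0,∞) → X)` with the compact-open topology. -/
abbrev IPath (X : Type*) [TopologicalSpace X] : Type _ := C(ℝ≥0, X)

variable {X : Type*} [TopologicalSpace X]

/-- The shift `θ_s : w(·) ↦ w(s + ·)`. -/
def shift (s : ℝ≥0) (w : IPath X) : IPath X :=
  w.comp ⟨fun t => s + t, by fun_prop⟩

/-- The splicing `w ⋈_s v` of two paths with `w s = v 0`. -/
def splice (s : ℝ≥0) (w v : IPath X) (h : w s = v 0) : IPath X :=
  ⟨fun t => if t ≤ s then w t else v (t - s), by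
    refine Continuous.if_le w.continuous (v.continuous.comp ?_) continuous_id
      continuous_const ?_
    · exact continuous_id.sub continuous_const
    · intro t ht
      rw [ht, tsub_self]
      exact h⟩

/-- The functional `ζ(w) = ∫₀^∞ e^{-λ t} φ(w(t)) dt`. -/
def zeta (lam : ℝ) (phi : X → ℝ) (w : IPath X) : ℝ :=
  ∫ t in Ioi (0 : ℝ), Real.exp (-lam * t) * phi (w (Real.toNNReal t))

/-- A set of paths in `X` is "limit-closed" (closed in the direct limit topology of
`Ω = lim Ω^i`) if its trace on each path space `Ω^i = {w : range w ⊆ A i}` coincides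
with the trace of a closed subset of the path space of `X`. -/
def LimitClosed {X : Type*} [TopologicalSpace X] (A : ℕ → Set X)
    (C : Set (IPath X)) : Prop :=
  ∀ i, ∃ D : Set (IPath X), IsClosed D ∧
    C ∩ {w : IPath X | range ⇑w ⊆ A i} = D ∩ {w : IPath X | range ⇑w ⊆ A i}

namespace SemiflowAux

open Real Filter Topology

lemma integrand_cont {lam : ℝ} {φ : X → ℝ} (hφ : Continuous φ) (w : IPath X) :
    Continuous fun t : ℝ => Real.exp (-lam * t) * φ (w (Real.toNNReal t)) := by
  have : Continuous fun t : ℝ => w (Real.toNNReal t) :=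
    w.continuous.comp continuous_real_toNNReal
  exact ((Real.continuous_exp.comp (continuous_const.mul continuous_id)).mul (hφ.comp this))

lemma integrand_integrableOn {lam M : ℝ} (hlam : 0 < lam) {φ : X → ℝ} (hφ : Continuous φ)
    (hM : ∀ x, |φ x| ≤ M) (w : IPath X) {a : ℝ} :
    IntegrableOn (fun t : ℝ => Real.exp (-lam * t) * φ (w (Real.toNNReal t))) (Ioi a) := by
  refine Integrable.mono' ((exp_neg_integrableOn_Ioi a hlam).const_mul M)
    ((integrand_cont hφ w).aestronglyMeasurable) ?_
  refine ae_of_all _ fun t => ?_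
  have h1 : |φ (w (Real.toNNReal t))| ≤ M := hM _
  have h2 : (0:ℝ) < Real.exp (-lam * t) := Real.exp_pos _
  have : ‖Real.exp (-lam * t) * φ (w (Real.toNNReal t))‖
      = Real.exp (-lam * t) * |φ (w (Real.toNNReal t))| := by
    rw [norm_mul, Real.norm_eq_abs, Real.norm_eq_abs, abs_of_pos h2]
  rw [this, mul_comm M]
  exact mul_le_mul_of_nonneg_left h1 h2.le

lemma integral_exp_neg_mul_Ioi {lam : ℝ} (hlam : 0 < lam) (T : ℝ) :
    ∫ t in Ioi T, Real.exp (-lam * t) = Real.exp (-lam * T) / lam := by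
  have hderiv : ∀ t ∈ Ici T, HasDerivAt (fun t : ℝ => -Real.exp (-lam * t) / lam)
      (Real.exp (-lam * t)) t := by
    intro t _
    have h1 : HasDerivAt (fun t : ℝ => -lam * t) (-lam) t := by
      simpa using (hasDerivAt_id t).const_mul (-lam)
    have h2 : HasDerivAt (fun t : ℝ => Real.exp (-lam * t)) (Real.exp (-lam * t) * (-lam)) t :=
      (Real.hasDerivAt_exp _).comp t h1
    have := (h2.neg).div_const lam
    refine this.congr_deriv ?_
    have hl : lam ≠ 0 := hlam.ne'
    rw [mul_neg, neg_neg, mul_div_assoc, div_self hl, mul_one]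
  have htends : Tendsto (fun t : ℝ => -Real.exp (-lam * t) / lam) atTop (𝓝 0) := by
    have : Tendsto (fun t : ℝ => -lam * t) atTop atBot :=
      tendsto_id.const_mul_atTop_of_neg (neg_lt_zero.2 hlam)
    have h2 := (Real.tendsto_exp_atBot).comp this
    have := (h2.neg).div_const lam
    simpa using this
  have := integral_Ioi_of_hasDerivAt_of_tendsto' hderiv
    (exp_neg_integrableOn_Ioi T hlam) htends
  rw [this]
  ring


lemma integral_Ioi_shift (σ : ℝ) (f : ℝ → ℝ) (hσ : 0 ≤ σ) :
    ∫ t in Ioi σ, f t = ∫ t in Ioi 0, f (t + σ) := by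
  rw [← integral_indicator measurableSet_Ioi, ← integral_indicator measurableSet_Ioi,
    ← integral_add_right_eq_self (fun t => (Ioi σ).indicator f t) σ]
  congr 1
  ext t
  by_cases ht : (0:ℝ) < t
  · rw [indicator_of_mem (by simpa using ht), indicator_of_mem
      (by simp [mem_Ioi, lt_add_iff_pos_left, ht])]
  · rw [indicator_of_notMem (by simpa using ht), indicator_of_notMem
      (by simp [mem_Ioi, lt_add_iff_pos_left]; exact le_of_not_gt ht)]

lemma zeta_shift {lam M : ℝ} (hlam : 0 < lam) {φ : X → ℝ} (hφ : Continuous φ)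
    (hM : ∀ x, |φ x| ≤ M) (σ : ℝ≥0) (w : IPath X) :
    zeta lam φ w = (∫ t in Ioc (0:ℝ) σ, Real.exp (-lam * t) * φ (w (Real.toNNReal t)))
      + Real.exp (-lam * σ) * zeta lam φ (shift σ w) := by
  have hsplit : Ioc (0:ℝ) σ ∪ Ioi (σ:ℝ) = Ioi (0:ℝ) := Ioc_union_Ioi_eq_Ioi σ.coe_nonneg
  have hdisj : Disjoint (Ioc (0:ℝ) σ) (Ioi (σ:ℝ)) := Ioc_disjoint_Ioi le_rfl
  have hint := integrand_integrableOn (a := (0:ℝ)) hlam hφ hM w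
  have h1 : IntegrableOn (fun t : ℝ => Real.exp (-lam * t) * φ (w (Real.toNNReal t)))
      (Ioc (0:ℝ) σ) := hint.mono_set Ioc_subset_Ioi_self
  have h2 : IntegrableOn (fun t : ℝ => Real.exp (-lam * t) * φ (w (Real.toNNReal t)))
      (Ioi (σ:ℝ)) := (integrand_integrableOn (a := (σ:ℝ)) hlam hφ hM w)
  have key : zeta lam φ w
      = (∫ t in Ioc (0:ℝ) σ, Real.exp (-lam * t) * φ (w (Real.toNNReal t)))
        + ∫ t in Ioi (σ:ℝ), Real.exp (-lam * t) * φ (w (Real.toNNReal t)) := by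
    rw [zeta, ← hsplit, setIntegral_union hdisj measurableSet_Ioi h1 h2]
  rw [key]
  congr 1
  rw [integral_Ioi_shift _ _ σ.coe_nonneg, zeta, ← integral_const_mul]
  refine setIntegral_congr_fun measurableSet_Ioi fun t ht => ?_
  have ht' : (0:ℝ) ≤ t := le_of_lt ht
  have htn : Real.toNNReal (t + σ) = σ + Real.toNNReal t := by
    rw [Real.toNNReal_add ht' σ.coe_nonneg, Real.toNNReal_coe, add_comm]
  have hshift : (shift σ w) (Real.toNNReal t) = w (σ + Real.toNNReal t) := rfl
  rw [htn, ← hshift, show -lam*(t+(σ:ℝ)) = -lam*(σ:ℝ) + -lam*t by ring, Real.exp_add]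
  ring

lemma zeta_splice {lam M : ℝ} (hlam : 0 < lam) {φ : X → ℝ} (hφ : Continuous φ)
    (hM : ∀ x, |φ x| ≤ M) (σ : ℝ≥0) (w v : IPath X) (h : w σ = v 0) :
    zeta lam φ (splice σ w v h)
      = (∫ t in Ioc (0:ℝ) σ, Real.exp (-lam * t) * φ (w (Real.toNNReal t)))
        + Real.exp (-lam * σ) * zeta lam φ v := by
  have hsplit : Ioc (0:ℝ) σ ∪ Ioi (σ:ℝ) = Ioi (0:ℝ) := Ioc_union_Ioi_eq_Ioi σ.coe_nonneg
  have hdisj : Disjoint (Ioc (0:ℝ) σ) (Ioi (σ:ℝ)) := Ioc_disjoint_Ioi le_rfl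
  have hint := integrand_integrableOn (a := (0:ℝ)) hlam hφ hM (splice σ w v h)
  have h1 : IntegrableOn (fun t : ℝ => Real.exp (-lam * t) * φ ((splice σ w v h) (Real.toNNReal t)))
      (Ioc (0:ℝ) σ) := hint.mono_set Ioc_subset_Ioi_self
  have h2 : IntegrableOn (fun t : ℝ => Real.exp (-lam * t) * φ ((splice σ w v h) (Real.toNNReal t)))
      (Ioi (σ:ℝ)) := integrand_integrableOn (a := (σ:ℝ)) hlam hφ hM (splice σ w v h)
  have key : zeta lam φ (splice σ w v h)
      = (∫ t in Ioc (0:ℝ) σ, Real.exp (-lam * t) * φ ((splice σ w v h) (Real.toNNReal t)))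
        + ∫ t in Ioi (σ:ℝ), Real.exp (-lam * t) * φ ((splice σ w v h) (Real.toNNReal t)) := by
    rw [zeta, ← hsplit, setIntegral_union hdisj measurableSet_Ioi h1 h2]
  rw [key]
  congr 1
  · refine setIntegral_congr_fun measurableSet_Ioc fun t ht => ?_
    have hle : Real.toNNReal t ≤ σ := Real.toNNReal_le_iff_le_coe.2 ht.2
    have : (splice σ w v h) (Real.toNNReal t) = w (Real.toNNReal t) := if_pos hle
    rw [this]
  · rw [integral_Ioi_shift _ _ σ.coe_nonneg, zeta, ← integral_const_mul]
    refine setIntegral_congr_fun measurableSet_Ioi fun t ht => ?_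
    have ht' : (0:ℝ) < t := ht
    have htn : Real.toNNReal (t + σ) = σ + Real.toNNReal t := by
      rw [Real.toNNReal_add ht'.le σ.coe_nonneg, Real.toNNReal_coe, add_comm]
    have hpos : (0:ℝ≥0) < Real.toNNReal t := Real.toNNReal_pos.2 ht'
    have hnle : ¬ (Real.toNNReal (t + σ) ≤ σ) := by
      rw [htn]
      simpa using hpos.ne'
    have hval : (splice σ w v h) (Real.toNNReal (t + σ)) = v (Real.toNNReal t) := by
      have : (splice σ w v h) (Real.toNNReal (t + σ)) = v (Real.toNNReal (t + σ) - σ) :=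
        if_neg hnle
      rw [this, htn, add_tsub_cancel_left]
    rw [hval, show -lam*(t+(σ:ℝ)) = -lam*(σ:ℝ) + -lam*t by ring, Real.exp_add]
    ring


lemma integrable_aux {lam M : ℝ} (hlam : 0 < lam) {ψ : ℝ≥0 → ℝ} (hψ : Continuous ψ)
    (hM : ∀ t, |ψ t| ≤ M) (a : ℝ) :
    IntegrableOn (fun t : ℝ => Real.exp (-lam * t) * ψ (Real.toNNReal t)) (Ioi a) := by
  refine Integrable.mono' ((exp_neg_integrableOn_Ioi a hlam).const_mul M)
    (((Real.continuous_exp.comp (continuous_const.mul continuous_id)).mul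
      (hψ.comp continuous_real_toNNReal)).aestronglyMeasurable) ?_
  refine ae_of_all _ fun t => ?_
  have h2 : (0:ℝ) < Real.exp (-lam * t) := Real.exp_pos _
  have : ‖Real.exp (-lam * t) * ψ (Real.toNNReal t)‖
      = Real.exp (-lam * t) * |ψ (Real.toNNReal t)| := by
    rw [norm_mul, Real.norm_eq_abs, Real.norm_eq_abs, abs_of_pos h2]
  rw [this, mul_comm M]
  exact mul_le_mul_of_nonneg_left (hM _) h2.le

lemma abs_setIntegral_le {s : Set ℝ} (hs : MeasurableSet s) {f b : ℝ → ℝ}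
    (hfi : IntegrableOn f s) (hbi : IntegrableOn b s) (hb : ∀ t ∈ s, |f t| ≤ b t) :
    |∫ t in s, f t| ≤ ∫ t in s, b t := by
  calc |∫ t in s, f t| ≤ ∫ t in s, |f t| := by
        simpa [Real.norm_eq_abs] using
          norm_integral_le_integral_norm (μ := volume.restrict s) f
    _ ≤ ∫ t in s, b t := setIntegral_mono_on hfi.abs hbi hs hb

lemma Fint_continuousOn {lam M : ℝ} (hlam : 0 < lam) (hM0 : 0 ≤ M) :
    ContinuousOn
      (fun g : C(ℝ≥0, ℝ) => ∫ t in Ioi (0:ℝ), Real.exp (-lam * t) * g (Real.toNNReal t))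
      {g : C(ℝ≥0, ℝ) | ∀ t, |g t| ≤ M} := by
  set 𝒦 : Set C(ℝ≥0, ℝ) := {g : C(ℝ≥0, ℝ) | ∀ t, |g t| ≤ M} with h𝒦
  set Fint : C(ℝ≥0, ℝ) → ℝ :=
    fun g => ∫ t in Ioi (0:ℝ), Real.exp (-lam * t) * g (Real.toNNReal t) with hFint
  intro g₀ hg₀
  rw [ContinuousWithinAt, Metric.tendsto_nhds]
  intro ε hε
  -- choose the truncation time T
  have htail : Tendsto (fun T : ℝ => (2*M+1) * (Real.exp (-lam * T) / lam)) atTop (𝓝 0) := by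
    have h1 : Tendsto (fun T : ℝ => -lam * T) atTop atBot :=
      tendsto_id.const_mul_atTop_of_neg (neg_lt_zero.2 hlam)
    have h2 := Real.tendsto_exp_atBot.comp h1
    have := (h2.div_const lam).const_mul (2*M+1)
    simpa using this
  obtain ⟨T, hT0, hTtail⟩ : ∃ T : ℝ, 0 ≤ T ∧ (2*M+1) * (Real.exp (-lam * T) / lam) < ε/2 := by
    have := ((htail.eventually (gt_mem_nhds (by positivity : (0:ℝ) < ε/2))).and
      (eventually_ge_atTop (0:ℝ))).exists
    obtain ⟨T, h1, h2⟩ := this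
    exact ⟨T, h2, h1⟩
  set δ : ℝ := ε * lam / 4 with hδdef
  have hδ : 0 < δ := by positivity
  -- uniform convergence on the compact [0, T]
  have hid : Tendsto (id : C(ℝ≥0, ℝ) → C(ℝ≥0, ℝ)) (nhdsWithin g₀ 𝒦) (nhds g₀) :=
    tendsto_id.mono_right nhdsWithin_le_nhds
  have hunif := ContinuousMap.tendsto_iff_forall_isCompact_tendstoUniformlyOn.mp hid
    (Icc 0 (Real.toNNReal T)) isCompact_Icc
  have h3 := (Metric.tendstoUniformlyOn_iff.mp hunif) δ hδ
  filter_upwards [eventually_mem_nhdsWithin, h3] with g hgK hgδ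
  -- now the estimate
  have hint_g : IntegrableOn (fun t : ℝ => Real.exp (-lam * t) * g (Real.toNNReal t))
      (Ioi (0:ℝ)) := integrable_aux hlam g.continuous hgK 0
  have hint_g0 : IntegrableOn (fun t : ℝ => Real.exp (-lam * t) * g₀ (Real.toNNReal t))
      (Ioi (0:ℝ)) := integrable_aux hlam g₀.continuous hg₀ 0
  set F : ℝ → ℝ := fun t => Real.exp (-lam * t) * g (Real.toNNReal t)
    - Real.exp (-lam * t) * g₀ (Real.toNNReal t) with hF
  have hFint : IntegrableOn F (Ioi (0:ℝ)) := hint_g.sub hint_g0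
  have hdiff : Fint g - Fint g₀ = ∫ t in Ioi (0:ℝ), F t := (integral_sub hint_g hint_g0).symm
  have hsplit : Ioc (0:ℝ) T ∪ Ioi T = Ioi (0:ℝ) := Ioc_union_Ioi_eq_Ioi hT0
  have hdisj : Disjoint (Ioc (0:ℝ) T) (Ioi T) := Ioc_disjoint_Ioi le_rfl
  have hF1 : IntegrableOn F (Ioc (0:ℝ) T) := hFint.mono_set Ioc_subset_Ioi_self
  have hF2 : IntegrableOn F (Ioi T) :=
    (integrable_aux hlam g.continuous hgK T).sub (integrable_aux hlam g₀.continuous hg₀ T)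
  have hsum : ∫ t in Ioi (0:ℝ), F t = (∫ t in Ioc (0:ℝ) T, F t) + ∫ t in Ioi T, F t := by
    rw [← hsplit, setIntegral_union hdisj measurableSet_Ioi hF1 hF2]
  -- piece 1
  have hb1i' : IntegrableOn (fun t : ℝ => δ * Real.exp (-lam * t)) (Ioi (0:ℝ)) :=
    (exp_neg_integrableOn_Ioi (0:ℝ) hlam).const_mul δ
  have hb1i : IntegrableOn (fun t : ℝ => δ * Real.exp (-lam * t)) (Ioc (0:ℝ) T) :=
    hb1i'.mono_set Ioc_subset_Ioi_self
  have hp1 : |∫ t in Ioc (0:ℝ) T, F t| ≤ δ * (1 / lam) := by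
    have hb : ∀ t ∈ Ioc (0:ℝ) T, |F t| ≤ δ * Real.exp (-lam * t) := by
      intro t ht
      have hmem : Real.toNNReal t ∈ Icc (0:ℝ≥0) (Real.toNNReal T) :=
        ⟨zero_le, Real.toNNReal_le_toNNReal ht.2⟩
      have hd := hgδ _ hmem
      have habs : |g (Real.toNNReal t) - g₀ (Real.toNNReal t)| ≤ δ := by
        rw [abs_sub_comm, ← Real.dist_eq]
        exact hd.le
      have hFt : F t = Real.exp (-lam * t) * (g (Real.toNNReal t) - g₀ (Real.toNNReal t)) := by
        simp only [hF]; ring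
      rw [hFt, abs_mul, abs_of_pos (Real.exp_pos _), mul_comm δ]
      exact mul_le_mul_of_nonneg_left habs (Real.exp_pos _).le
    calc |∫ t in Ioc (0:ℝ) T, F t| ≤ ∫ t in Ioc (0:ℝ) T, δ * Real.exp (-lam * t) :=
          abs_setIntegral_le measurableSet_Ioc hF1 hb1i hb
      _ ≤ ∫ t in Ioi (0:ℝ), δ * Real.exp (-lam * t) := by
          refine setIntegral_mono_set ((exp_neg_integrableOn_Ioi (0:ℝ) hlam).const_mul δ)
            (ae_of_all _ fun t => by positivity) (HasSubset.Subset.eventuallyLE Ioc_subset_Ioi_self)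
      _ = δ * (1 / lam) := by
          rw [integral_const_mul, integral_exp_neg_mul_Ioi hlam 0]
          norm_num
  -- piece 2
  have hb2i : IntegrableOn (fun t : ℝ => (2*M+1) * Real.exp (-lam * t)) (Ioi T) :=
    (exp_neg_integrableOn_Ioi T hlam).const_mul _
  have hp2 : |∫ t in Ioi T, F t| ≤ (2*M+1) * (Real.exp (-lam * T) / lam) := by
    have hb : ∀ t ∈ Ioi T, |F t| ≤ (2*M+1) * Real.exp (-lam * t) := by
      intro t _
      have hFt : F t = Real.exp (-lam * t) * (g (Real.toNNReal t) - g₀ (Real.toNNReal t)) := by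
        simp only [hF]; ring
      rw [hFt, abs_mul, abs_of_pos (Real.exp_pos _), mul_comm]
      refine mul_le_mul_of_nonneg_right ?_ (Real.exp_pos _).le
      calc |g (Real.toNNReal t) - g₀ (Real.toNNReal t)|
          ≤ |g (Real.toNNReal t)| + |g₀ (Real.toNNReal t)| := abs_sub _ _
        _ ≤ M + M := add_le_add (hgK _) (hg₀ _)
        _ ≤ 2*M+1 := by linarith
    calc |∫ t in Ioi T, F t| ≤ ∫ t in Ioi T, (2*M+1) * Real.exp (-lam * t) :=
          abs_setIntegral_le measurableSet_Ioi hF2 hb2i hb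
      _ = (2*M+1) * (Real.exp (-lam * T) / lam) := by
          rw [integral_const_mul, integral_exp_neg_mul_Ioi hlam T]
  have hδcalc : δ * (1 / lam) = ε / 4 := by
    rw [hδdef]; field_simp
  have : dist (Fint g) (Fint g₀) < ε := by
    rw [Real.dist_eq, hdiff, hsum]
    calc |(∫ t in Ioc (0:ℝ) T, F t) + ∫ t in Ioi T, F t|
        ≤ |∫ t in Ioc (0:ℝ) T, F t| + |∫ t in Ioi T, F t| := abs_add_le _ _
      _ < ε/4 + ε/2 := by
          rw [← hδcalc]
          exact add_lt_add_of_le_of_lt hp1 (lt_of_le_of_lt hp2 hTtail)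
      _ < ε := by linarith
  exact this

lemma zeta_continuous {lam M : ℝ} (hlam : 0 < lam) (hM0 : 0 ≤ M) {φ : X → ℝ}
    (hφ : Continuous φ) (hM : ∀ x, |φ x| ≤ M) :
    Continuous (zeta lam φ : IPath X → ℝ) := by
  have key : zeta lam φ =
      (fun g : C(ℝ≥0, ℝ) => ∫ t in Ioi (0:ℝ), Real.exp (-lam * t) * g (Real.toNNReal t))
        ∘ (fun w : IPath X => (⟨φ, hφ⟩ : C(X, ℝ)).comp w) := rfl
  rw [key]
  exact (Fint_continuousOn hlam hM0).comp_continuous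
    (ContinuousMap.continuous_postcomp _) (fun w t => hM _)


lemma laplace_eq_zero {h : ℝ → ℝ} {M : ℝ} (hc : Continuous h) (hM : ∀ t, |h t| ≤ M)
    (hz : ∀ n : ℕ, ∫ t in Ioi (0:ℝ), Real.exp (-((n:ℝ)+1) * t) * h t = 0) :
    ∀ t : ℝ, 0 ≤ t → h t = 0 := by
  have hM0 : 0 ≤ M := le_trans (abs_nonneg _) (hM 0)
  set H : ℝ → ℝ := fun x => if 0 < x then x * h (-Real.log x) else 0 with hHdef
  have hHval : ∀ x : ℝ, 0 < x → H x = x * h (-Real.log x) := fun x hx => if_pos hx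
  have hHval' : ∀ x : ℝ, ¬ (0 < x) → H x = 0 := fun x hx => if_neg hx
  have hHb : ∀ x, |H x| ≤ M * |x| := by
    intro x
    by_cases hx : 0 < x
    · rw [hHval x hx, abs_mul, mul_comm]
      exact mul_le_mul_of_nonneg_right (hM _) (abs_nonneg _)
    · rw [hHval' x hx, abs_zero]
      positivity
  have hHc : Continuous H := by
    rw [continuous_iff_continuousAt]
    intro x
    rcases lt_trichotomy x 0 with hx | hx | hx
    · refine ContinuousAt.congr (f := fun _ : ℝ => (0:ℝ)) continuousAt_const
        (Filter.eventuallyEq_of_mem (Iio_mem_nhds hx) fun y hy => ?_)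
      exact (hHval' y (not_lt.2 (le_of_lt hy))).symm
    · subst hx
      have hH00 : H 0 = 0 := hHval' 0 (lt_irrefl 0)
      rw [ContinuousAt, hH00]
      refine squeeze_zero_norm (a := fun x : ℝ => M * |x|) (fun x => ?_) ?_
      · rw [Real.norm_eq_abs]
        exact hHb x
      · have : Continuous fun x : ℝ => M * |x| := continuous_const.mul continuous_abs
        have h2 := this.tendsto (0:ℝ)
        simpa using h2
    · have hca : ContinuousAt (fun y : ℝ => y * h (-Real.log y)) x := by
        refine continuousAt_id.mul (hc.continuousAt.comp ?_)
        exact (Real.continuousAt_log (ne_of_gt hx)).neg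
      refine hca.congr (Filter.eventuallyEq_of_mem (Ioi_mem_nhds hx) fun y hy => ?_)
      exact (hHval y hy).symm
  -- moments of H on (0,1) vanish
  have himg : (fun t : ℝ => Real.exp (-t)) '' Ioi (0:ℝ) = Ioo (0:ℝ) 1 := by
    ext x
    constructor
    · rintro ⟨t, ht, rfl⟩
      exact ⟨Real.exp_pos _, Real.exp_lt_one_iff.2 (neg_lt_zero.2 ht)⟩
    · rintro ⟨hx0, hx1⟩
      refine ⟨-Real.log x, ?_, by simp [Real.exp_log hx0]⟩
      simpa using Real.log_neg hx0 hx1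
  have hinj : InjOn (fun t : ℝ => Real.exp (-t)) (Ioi 0) := by
    intro a _ b _ hab
    have := Real.exp_injective hab
    linarith [neg_injective this]
  have hderiv : ∀ t ∈ Ioi (0:ℝ),
      HasDerivWithinAt (fun t : ℝ => Real.exp (-t)) (-Real.exp (-t)) (Ioi 0) t := by
    intro t _
    have h1 : HasDerivAt (fun t : ℝ => Real.exp (-t)) (Real.exp (-t) * (-1)) t :=
      (Real.hasDerivAt_exp (-t)).comp t ((hasDerivAt_id t).neg)
    simpa [mul_neg_one] using h1.hasDerivWithinAt
  have hmom : ∀ n : ℕ, ∫ x in Ioo (0:ℝ) 1, x ^ n * H x = 0 := by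
    intro n
    have himage := integral_image_eq_integral_abs_deriv_smul measurableSet_Ioi hderiv hinj
      (fun x : ℝ => x ^ n * H x)
    rw [himg] at himage
    rw [himage]
    have hcong : ∀ t ∈ Ioi (0:ℝ),
        |(-Real.exp (-t))| • ((Real.exp (-t)) ^ n * H (Real.exp (-t)))
        = Real.exp (-(((n:ℝ)+1)+1) * t) * h t := by
      intro t _
      have hH : H (Real.exp (-t)) = Real.exp (-t) * h t := by
        rw [hHval _ (Real.exp_pos _), Real.log_exp, neg_neg]
      rw [hH, abs_neg, abs_of_pos (Real.exp_pos _), smul_eq_mul, ← Real.exp_nat_mul,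
        show (-(((n:ℝ)+1)+1) * t) = (-t) + (((n:ℝ) * -t) + (-t)) by ring,
        Real.exp_add, Real.exp_add]
      ring
    rw [setIntegral_congr_fun measurableSet_Ioi hcong]
    have h2 := hz (n+1)
    have h3 : ((n+1:ℕ):ℝ) + 1 = ((n:ℝ)+1)+1 := by push_cast; ring
    rw [h3] at h2
    exact h2
  -- integrability helpers
  have hHint : ∀ g : ℝ → ℝ, Continuous g → IntegrableOn g (Ioo (0:ℝ) 1) := by
    intro g hg
    exact (hg.integrableOn_Icc (a := (0:ℝ)) (b := 1)).mono_set Ioo_subset_Icc_self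
  -- polynomial moments vanish
  have hpoly : ∀ p : Polynomial ℝ, ∫ x in Ioo (0:ℝ) 1, p.eval x * H x = 0 := by
    intro p
    induction p using Polynomial.induction_on with
    | C a =>
      have h0 := hmom 0
      simp only [pow_zero, one_mul] at h0
      have heval : ∀ x : ℝ, (Polynomial.C a).eval x * H x = a * H x := by
        intro x; rw [Polynomial.eval_C]
      simp only [heval]
      rw [integral_const_mul, h0, mul_zero]
    | add p q hp hq =>
      have hip : IntegrableOn (fun x => p.eval x * H x) (Ioo (0:ℝ) 1) :=
        hHint _ (p.continuous.mul hHc)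
      have hiq : IntegrableOn (fun x => q.eval x * H x) (Ioo (0:ℝ) 1) :=
        hHint _ (q.continuous.mul hHc)
      have : ∀ x : ℝ, (p + q).eval x * H x = p.eval x * H x + q.eval x * H x := by
        intro x; rw [Polynomial.eval_add]; ring
      simp only [this]
      rw [integral_add hip hiq, hp, hq, add_zero]
    | monomial n a _ =>
      have : ∀ x : ℝ, (Polynomial.C a * Polynomial.X ^ (n+1)).eval x * H x
          = a * (x ^ (n+1) * H x) := by
        intro x
        simp only [Polynomial.eval_mul, Polynomial.eval_C, Polynomial.eval_pow,
          Polynomial.eval_X]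
        ring
      simp only [this]
      rw [integral_const_mul, hmom (n+1), mul_zero]
  -- Stone–Weierstrass: ∫ H² = 0
  have hsq : ∫ x in Ioo (0:ℝ) 1, H x ^ 2 = 0 := by
    have hnn : 0 ≤ ∫ x in Ioo (0:ℝ) 1, H x ^ 2 :=
      setIntegral_nonneg measurableSet_Ioo fun x _ => sq_nonneg _
    have hub : ∀ ε : ℝ, 0 < ε → ∫ x in Ioo (0:ℝ) 1, H x ^ 2 ≤ ε * (M + 1) := by
      intro ε hε
      have h1 : ((⟨H, hHc⟩ : C(ℝ,ℝ)).restrict (Icc (0:ℝ) 1)) ∈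
          (polynomialFunctions (Icc (0:ℝ) 1)).topologicalClosure := by
        rw [polynomialFunctions_closure_eq_top]
        exact Algebra.mem_top
      rw [← SetLike.mem_coe, Subalgebra.topologicalClosure_coe] at h1
      obtain ⟨g, hgmem, hdist⟩ := Metric.mem_closure_iff.mp h1 ε hε
      rw [polynomialFunctions_coe] at hgmem
      obtain ⟨p, rfl⟩ := hgmem
      have hi1 : IntegrableOn (fun x => (H x - p.eval x) * H x) (Ioo (0:ℝ) 1) :=
        hHint _ ((hHc.sub p.continuous).mul hHc)
      have hi2 : IntegrableOn (fun x => p.eval x * H x) (Ioo (0:ℝ) 1) :=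
        hHint _ (p.continuous.mul hHc)
      have hbound : ∀ x ∈ Ioo (0:ℝ) 1, ‖(H x - p.eval x) * H x‖ ≤ ε * M := by
        intro x hx
        have hxmem : x ∈ Icc (0:ℝ) 1 := Ioo_subset_Icc_self hx
        have hd := ContinuousMap.dist_apply_le_dist
          (f := (⟨H, hHc⟩ : C(ℝ,ℝ)).restrict (Icc (0:ℝ) 1))
          (g := Polynomial.toContinuousMapOnAlgHom (Icc (0:ℝ) 1) p) ⟨x, hxmem⟩
        have hd2 : |H x - p.eval x| < ε := by
          have : dist (H x) (p.eval x) < ε := lt_of_le_of_lt hd hdist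
          rwa [Real.dist_eq] at this
        have hHx : |H x| ≤ M := by
          refine le_trans (hHb x) ?_
          have : |x| ≤ 1 := by
            rw [abs_of_pos hx.1]; exact hx.2.le
          nlinarith
        rw [Real.norm_eq_abs, abs_mul]
        exact mul_le_mul hd2.le hHx (abs_nonneg _) hε.le
      have hexpand : ∫ x in Ioo (0:ℝ) 1, H x ^ 2
          = ∫ x in Ioo (0:ℝ) 1, (H x - p.eval x) * H x := by
        have heq : ∀ x : ℝ, H x ^ 2 = (H x - p.eval x) * H x + p.eval x * H x := by
          intro x; ring
        simp only [heq]
        rw [integral_add hi1 hi2, hpoly p, add_zero]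
      rw [hexpand]
      have hvol : volume (Ioo (0:ℝ) 1) < ⊤ := by
        rw [Real.volume_Ioo]
        exact ENNReal.ofReal_lt_top
      have := norm_setIntegral_le_of_norm_le_const hvol hbound
      have hvol2 : (volume (Ioo (0:ℝ) 1)).toReal = 1 := by
        rw [Real.volume_Ioo]
        norm_num
      rw [measureReal_def, hvol2, mul_one] at this
      calc ∫ x in Ioo (0:ℝ) 1, (H x - p.eval x) * H x
          ≤ |∫ x in Ioo (0:ℝ) 1, (H x - p.eval x) * H x| := le_abs_self _
        _ ≤ ε * M := by simpa [Real.norm_eq_abs] using this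
        _ ≤ ε * (M + 1) := by nlinarith
    by_contra hne
    have hpos : 0 < ∫ x in Ioo (0:ℝ) 1, H x ^ 2 := lt_of_le_of_ne hnn (Ne.symm hne)
    have hub2 := hub ((∫ x in Ioo (0:ℝ) 1, H x ^ 2) / (2 * (M + 1))) (by positivity)
    have heq : (∫ x in Ioo (0:ℝ) 1, H x ^ 2) / (2 * (M + 1)) * (M + 1)
        = (∫ x in Ioo (0:ℝ) 1, H x ^ 2) / 2 := by
      have hM1 : (M + 1) ≠ 0 := by positivity
      field_simp
    rw [heq] at hub2
    linarith
  -- H vanishes on (0,1)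
  have hH0 : ∀ x ∈ Ioo (0:ℝ) 1, H x = 0 := by
    by_contra hcon
    push_neg at hcon
    obtain ⟨x₀, hx₀, hx₀ne⟩ := hcon
    have hint : IntegrableOn (fun x => H x ^ 2) (Ioo (0:ℝ) 1) := hHint _ (hHc.pow 2)
    have hae := (integral_eq_zero_iff_of_nonneg (fun x => sq_nonneg (H x)) hint).mp hsq
    have hmeas : MeasurableSet {x : ℝ | H x ^ 2 ≠ 0} := by
      have : {x : ℝ | H x ^ 2 ≠ 0} = (fun x => H x ^ 2) ⁻¹' ({0}ᶜ) := rfl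
      rw [this]
      exact ((hHc.pow 2).measurable) (measurableSet_singleton 0).compl
    have hzero : volume ({x : ℝ | H x ^ 2 ≠ 0} ∩ Ioo (0:ℝ) 1) = 0 := by
      have := Filter.eventuallyEq_iff_exists_mem.mp hae
      rw [Filter.EventuallyEq, ae_restrict_iff' measurableSet_Ioo] at hae
      rw [ae_iff] at hae
      have hsub : {x : ℝ | H x ^ 2 ≠ 0} ∩ Ioo (0:ℝ) 1
          ⊆ {x | ¬ (x ∈ Ioo (0:ℝ) 1 → H x ^ 2 = (0:ℝ→ℝ) x)} := by
        intro x hx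
        simp only [mem_setOf_eq, Classical.not_imp]
        exact ⟨hx.2, hx.1⟩
      exact measure_mono_null hsub hae
    have hopen : IsOpen ({x : ℝ | H x ≠ 0} ∩ Ioo (0:ℝ) 1) := by
      refine IsOpen.inter ?_ isOpen_Ioo
      exact isOpen_compl_singleton.preimage hHc
    have hne2 : ({x : ℝ | H x ≠ 0} ∩ Ioo (0:ℝ) 1).Nonempty := ⟨x₀, hx₀ne, hx₀⟩
    have hposm := hopen.measure_pos volume hne2
    have hsub2 : {x : ℝ | H x ≠ 0} ∩ Ioo (0:ℝ) 1 ⊆ {x : ℝ | H x ^ 2 ≠ 0} ∩ Ioo (0:ℝ) 1 :=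
      fun x hx => ⟨pow_ne_zero 2 hx.1, hx.2⟩
    have := measure_mono_null hsub2 hzero
    exact absurd this hposm.ne'
  -- conclude for h
  have hIoi : ∀ t : ℝ, 0 < t → h t = 0 := by
    intro t ht
    have hmem : Real.exp (-t) ∈ Ioo (0:ℝ) 1 :=
      ⟨Real.exp_pos _, Real.exp_lt_one_iff.2 (neg_lt_zero.2 ht)⟩
    have := hH0 _ hmem
    rw [hHval _ (Real.exp_pos _), Real.log_exp, neg_neg] at this
    rcases mul_eq_zero.mp this with h1 | h1
    · exact absurd h1 (Real.exp_pos _).ne'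
    · exact h1
  intro t ht
  have hclosed : IsClosed {t : ℝ | h t = 0} := isClosed_eq hc continuous_const
  have hsubset : Ici (0:ℝ) ⊆ {t : ℝ | h t = 0} := by
    have h1 : Ioi (0:ℝ) ⊆ {t : ℝ | h t = 0} := fun s hs => hIoi s hs
    have h2 := closure_mono h1
    rwa [closure_Ioi, hclosed.closure_eq] at h2
  exact hsubset ht


lemma continuous_of_pieces {A : ℕ → Set X}
    (hfinal : ∀ U : Set X, IsOpen U ↔ ∀ i, IsOpen (Subtype.val ⁻¹' U : Set (A i)))
    {f : X → ℝ} (hf : ∀ i, Continuous fun a : A i => f a) : Continuous f := by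
  rw [continuous_def]
  intro U hU
  rw [hfinal]
  intro i
  exact (hf i).isOpen_preimage U hU

lemma exists_extension (A : ℕ → Set X) (hmono : Monotone A) (hcover : ⋃ i, A i = univ)
    (hfinal : ∀ U : Set X, IsOpen U ↔ ∀ i, IsOpen (Subtype.val ⁻¹' U : Set (A i)))
    (hstep : ∀ i, IsClosed (Subtype.val ⁻¹' (A i) : Set (A (i + 1))))
    (hPolish : ∀ i, PolishSpace (A i)) (j : ℕ) (f : BoundedContinuousFunction (A j) ℝ) :
    ∃ g : X → ℝ, Continuous g ∧ (∀ x, |g x| ≤ ‖f‖) ∧ ∀ a : A j, g a = f a := by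
  have hAsub : ∀ m, A (j + m) ⊆ A (j + (m + 1)) := fun m => hmono (by omega)
  -- one-step extension
  have hext : ∀ m (g : BoundedContinuousFunction (A (j + m)) ℝ),
      ∃ g' : BoundedContinuousFunction (A (j + (m + 1))) ℝ,
        ‖g'‖ = ‖g‖ ∧ ∀ y : A (j + m), g' (inclusion (hAsub m) y) = g y := by
    intro m g
    letI := hPolish (j + (m + 1))
    letI := TopologicalSpace.upgradeIsCompletelyMetrizable (A (j + (m + 1)))
    have hemb : Topology.IsClosedEmbedding (inclusion (hAsub m)) := by
      refine ⟨Topology.IsEmbedding.inclusion _, ?_⟩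
      rw [Set.range_inclusion]
      exact hstep (j + m)
    obtain ⟨g', hn, hc⟩ :=
      BoundedContinuousFunction.exists_extension_norm_eq_of_isClosedEmbedding g hemb
    exact ⟨g', hn, fun y => congrFun hc y⟩
  -- the recursive chain
  let ψ : ∀ m, BoundedContinuousFunction (A (j + m)) ℝ :=
    fun m => Nat.rec f (fun m g => (hext m g).choose) m
  have hψs : ∀ m, ψ (m + 1) = (hext m (ψ m)).choose := fun m => rfl
  have hnorm : ∀ m, ‖ψ m‖ = ‖f‖ := by
    intro m
    induction m with
    | zero => rfl
    | succ m ih => rw [hψs m, (hext m (ψ m)).choose_spec.1, ih]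
  have hcompat : ∀ m (y : A (j + m)), ψ (m + 1) (inclusion (hAsub m) y) = ψ m y :=
    fun m y => (hext m (ψ m)).choose_spec.2 y
  -- cross-compatibility
  have hcross : ∀ m n, m ≤ n → ∀ (x : X) (hxm : x ∈ A (j + m)) (hxn : x ∈ A (j + n)),
      ψ n ⟨x, hxn⟩ = ψ m ⟨x, hxm⟩ := by
    intro m n
    induction n with
    | zero =>
      intro h x hxm hxn
      obtain rfl : m = 0 := Nat.le_zero.mp h
      rfl
    | succ n ih =>
      intro h x hxm hxn
      rcases eq_or_lt_of_le h with rfl | hlt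
      · rfl
      · have hmn : m ≤ n := by omega
        have hxn' : x ∈ A (j + n) := hmono (by omega) hxm
        have heq : (⟨x, hxn⟩ : A (j + (n + 1))) = inclusion (hAsub n) ⟨x, hxn'⟩ := rfl
        rw [heq, hcompat n ⟨x, hxn'⟩, ih hmn x hxm hxn']
  have key : ∀ m n (x : X) (hxm : x ∈ A (j + m)) (hxn : x ∈ A (j + n)),
      ψ m ⟨x, hxm⟩ = ψ n ⟨x, hxn⟩ := by
    intro m n x hxm hxn
    rcases le_total m n with h | h
    · exact (hcross m n h x hxm hxn).symm
    · exact hcross n m h x hxn hxm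
  have hex : ∀ x : X, ∃ m, x ∈ A (j + m) := by
    intro x
    have : x ∈ ⋃ i, A i := by rw [hcover]; trivial
    obtain ⟨i, hi⟩ := mem_iUnion.mp this
    exact ⟨i, hmono (by omega) hi⟩
  refine ⟨fun x => ψ (hex x).choose ⟨x, (hex x).choose_spec⟩, ?_, ?_, ?_⟩
  case refine_2 =>
    intro x
    rw [← hnorm (hex x).choose]
    simpa [Real.norm_eq_abs] using
      BoundedContinuousFunction.norm_coe_le_norm (ψ (hex x).choose) ⟨x, (hex x).choose_spec⟩
  case refine_3 =>
    intro a
    have h0 : (a : X) ∈ A (j + 0) := a.2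
    exact key (hex (a : X)).choose 0 (a : X) (hex (a : X)).choose_spec h0
  case refine_1 =>
    refine continuous_of_pieces hfinal fun i => ?_
    have hisub : A i ⊆ A (j + i) := hmono (by omega)
    have heq : (fun a : A i => ψ (hex (a : X)).choose ⟨(a : X), (hex (a : X)).choose_spec⟩)
        = fun a : A i => ψ i (inclusion hisub a) := by
      funext a
      exact key (hex (a : X)).choose i (a : X) (hex (a : X)).choose_spec (hisub a.2)
    rw [heq]
    exact (ψ i).continuous.comp (continuous_inclusion hisub)


lemma exists_sep_family (A : ℕ → Set X) (hmono : Monotone A) (hcover : ⋃ i, A i = univ)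
    (hfinal : ∀ U : Set X, IsOpen U ↔ ∀ i, IsOpen (Subtype.val ⁻¹' U : Set (A i)))
    (hstep : ∀ i, IsClosed (Subtype.val ⁻¹' (A i) : Set (A (i + 1))))
    (hPolish : ∀ i, PolishSpace (A i))
    (hPhi : ∀ i, ∃ Φ : ℕ → (A i → ℝ),
      (∀ n, Continuous (Φ n)) ∧ (∀ n, ∃ M, ∀ a, |Φ n a| ≤ M) ∧
      ∀ a b : A i, a ≠ b → ∃ n, Φ n a ≠ Φ n b) :
    ∃ G : ℕ → X → ℝ,
      (∀ n, Continuous (G n)) ∧ (∀ n, ∃ M, 0 ≤ M ∧ ∀ x, |G n x| ≤ M) ∧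
      ∀ x y : X, x ≠ y → ∃ n, G n x ≠ G n y := by
  choose Φ hΦc hΦb hΦsep using hPhi
  have hbcf : ∀ j n, ∃ f : BoundedContinuousFunction (A j) ℝ, ∀ a, f a = Φ j n a := by
    intro j n
    obtain ⟨M, hM⟩ := hΦb j n
    exact ⟨BoundedContinuousFunction.ofNormedAddCommGroup (Φ j n) (hΦc j n) M
      (fun a => by simpa [Real.norm_eq_abs] using hM a), fun a => rfl⟩
  choose fb hfb using hbcf
  have hext := fun j n => exists_extension A hmono hcover hfinal hstep hPolish j (fb j n)
  choose g hgc hgb hgr using hext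
  refine ⟨fun k => g k.unpair.1 k.unpair.2, fun k => hgc _ _,
    fun k => ⟨‖fb k.unpair.1 k.unpair.2‖, norm_nonneg _, hgb _ _⟩, ?_⟩
  intro x y hxy
  have hxc : x ∈ ⋃ i, A i := by rw [hcover]; trivial
  have hyc : y ∈ ⋃ i, A i := by rw [hcover]; trivial
  obtain ⟨ix, hix⟩ := mem_iUnion.mp hxc
  obtain ⟨iy, hiy⟩ := mem_iUnion.mp hyc
  have hxj : x ∈ A (max ix iy) := hmono (le_max_left _ _) hix
  have hyj : y ∈ A (max ix iy) := hmono (le_max_right _ _) hiy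
  have hne : (⟨x, hxj⟩ : A (max ix iy)) ≠ ⟨y, hyj⟩ :=
    fun hcontra => hxy (congrArg Subtype.val hcontra)
  obtain ⟨n, hn⟩ := hΦsep (max ix iy) ⟨x, hxj⟩ ⟨y, hyj⟩ hne
  refine ⟨Nat.pair (max ix iy) n, ?_⟩
  simp only [Nat.unpair_pair]
  have hx' := hgr (max ix iy) n ⟨x, hxj⟩
  have hy' := hgr (max ix iy) n ⟨y, hyj⟩
  rw [hfb] at hx' hy'
  simpa [hx', hy'] using hn

end SemiflowAux


/-- **Generalized semiflow selection theorem** (direct limits of Polish spaces).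
`X = ⋃ i, A i` is the direct limit of an increasing sequence of Polish spaces `A i`,
each closed in the next, carrying the final topology and the σ-algebra `ℬ_X` of sets
whose trace on each `A i` is Borel; each `A i` has a countable family of bounded
continuous functions separating its points.  If `S : X → 2^Ω` has nonempty compact
values `S x ⊆ Ω_x` (S1), is closed-measurable (S2), is shift-compatible (S3), is
stable under splicing (S4), and maps each `A i` into some `Ω^{k i}`, then `S` has a
measurable selection with the semigroup property. -/
theorem generalized_semiflow_selection
    {X : Type*} [TopologicalSpace X] [MeasurableSpace X]
    (A : ℕ → Set X) (hmono : Monotone A) (hcover : ⋃ i, A i = univ)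
    (hfinal : ∀ U : Set X, IsOpen U ↔ ∀ i, IsOpen (Subtype.val ⁻¹' U : Set (A i)))
    (hstep : ∀ i, IsClosed (Subtype.val ⁻¹' (A i) : Set (A (i + 1))))
    (hPolish : ∀ i, PolishSpace (A i))
    (hSigma : ∀ B : Set X, MeasurableSet B ↔
      ∀ i, MeasurableSet[borel (A i)] (Subtype.val ⁻¹' B : Set (A i)))
    (hPhi : ∀ i, ∃ Φ : ℕ → (A i → ℝ),
      (∀ n, Continuous (Φ n)) ∧ (∀ n, ∃ M, ∀ a, |Φ n a| ≤ M) ∧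
      ∀ a b : A i, a ≠ b → ∃ n, Φ n a ≠ Φ n b)
    (S : X → Set (IPath X))
    (hS1a : ∀ x, (S x).Nonempty)
    (hS1b : ∀ x, IsCompact (S x))
    (hS1c : ∀ x, ∀ w ∈ S x, w 0 = x)
    (hS2 : ∀ C : Set (IPath X), LimitClosed A C →
      MeasurableSet {x | (S x ∩ C).Nonempty})
    (hS3 : ∀ x, ∀ w ∈ S x, ∀ s : ℝ≥0, shift s w ∈ S (w s))
    (hS4 : ∀ x, ∀ w ∈ S x, ∀ s : ℝ≥0, ∀ v, ∀ hv : v ∈ S (w s),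
      splice s w v ((hS1c _ v hv).symm) ∈ S x)
    (hk : ∀ i, ∃ k, i ≤ k ∧ ∀ x ∈ A i, ∀ w ∈ S x, range ⇑w ⊆ A k) :
    ∃ u : X → IPath X,
      (∀ C : Set (IPath X), LimitClosed A C → MeasurableSet (u ⁻¹' C)) ∧
      (∀ x, u x ∈ S x) ∧
      ∀ x, ∀ t₁ t₂ : ℝ≥0, u (u x t₁) t₂ = u x (t₁ + t₂) := by
  classical
  obtain ⟨G, hGc, hGb, hGsep⟩ :=
    SemiflowAux.exists_sep_family A hmono hcover hfinal hstep hPolish hPhi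
  choose Mb hMb0 hMbb using hGb
  set lam : ℕ → ℝ := fun n => (n.unpair.1 : ℝ) + 1 with hlamdef
  set phi : ℕ → X → ℝ := fun n => G n.unpair.2 with hphidef
  have hlampos : ∀ n, 0 < lam n := fun n => by positivity
  have hphic : ∀ n, Continuous (phi n) := fun n => hGc _
  set Mn : ℕ → ℝ := fun n => Mb n.unpair.2 with hMndef
  have hphib : ∀ n x, |phi n x| ≤ Mn n := fun n x => hMbb _ x
  have hMn0 : ∀ n, 0 ≤ Mn n := fun n => hMb0 _
  have hzc : ∀ n, Continuous (zeta (lam n) (phi n)) := fun n =>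
    SemiflowAux.zeta_continuous (hlampos n) (hMn0 n) (hphic n) (hphib n)
  -- the iterated argmax multimaps
  set SS : ℕ → X → Set (IPath X) := fun n => Nat.rec S
    (fun n Sn => fun x => Sn x ∩ (zeta (lam n) (phi n)) ⁻¹'
      {sSup (zeta (lam n) (phi n) '' Sn x)}) n with hSSdef
  have hSSs : ∀ n x, SS (n+1) x = SS n x ∩ (zeta (lam n) (phi n)) ⁻¹'
      {sSup (zeta (lam n) (phi n) '' SS n x)} := fun n x => rfl
  have hsub : ∀ n x, SS (n+1) x ⊆ SS n x := fun n x => inter_subset_left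
  have hsubS : ∀ n x, SS n x ⊆ S x := by
    intro n
    induction n with
    | zero => exact fun x => subset_rfl
    | succ n ih => exact fun x => (hsub n x).trans (ih x)
  have hcptne : ∀ n, (∀ x, IsCompact (SS n x)) ∧ (∀ x, (SS n x).Nonempty) := by
    intro n
    induction n with
    | zero => exact ⟨hS1b, hS1a⟩
    | succ n ih =>
      obtain ⟨hcpt, hne⟩ := ih
      refine ⟨fun x => (hcpt x).inter_right (isClosed_singleton.preimage (hzc n)), fun x => ?_⟩
      obtain ⟨w, hw, hmax⟩ := (hcpt x).exists_isMaxOn (hne x) (hzc n).continuousOn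
      have hgr : IsGreatest (zeta (lam n) (phi n) '' SS n x) (zeta (lam n) (phi n) w) :=
        ⟨mem_image_of_mem _ hw, by rintro r ⟨v, hv, rfl⟩; exact hmax hv⟩
      exact ⟨w, hw, hgr.csSup_eq.symm⟩
  have hmem_succ : ∀ n x w, w ∈ SS (n+1) x ↔ w ∈ SS n x ∧
      ∀ v ∈ SS n x, zeta (lam n) (phi n) v ≤ zeta (lam n) (phi n) w := by
    intro n x w
    constructor
    · rintro ⟨hw, hmax⟩
      have hsup : zeta (lam n) (phi n) w = sSup (zeta (lam n) (phi n) '' SS n x) := hmax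
      refine ⟨hw, fun v hv => ?_⟩
      rw [hsup]
      exact le_csSup (((hcptne n).1 x).bddAbove_image (hzc n).continuousOn)
        (mem_image_of_mem _ hv)
    · rintro ⟨hw, hmax⟩
      refine ⟨hw, ?_⟩
      have hgr : IsGreatest (zeta (lam n) (phi n) '' SS n x) (zeta (lam n) (phi n) w) :=
        ⟨mem_image_of_mem _ hw, by rintro r ⟨v, hv, rfl⟩; exact hmax v hv⟩
      exact hgr.csSup_eq.symm
  have hstartn : ∀ n x w, w ∈ SS n x → w 0 = x := fun n x w hw => hS1c x w (hsubS n x hw)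
  -- Krylov stability under shift and splice
  have hS34 : ∀ n, (∀ x w, w ∈ SS n x → ∀ s : ℝ≥0, shift s w ∈ SS n (w s)) ∧
      (∀ x w, w ∈ SS n x → ∀ s : ℝ≥0, ∀ v, ∀ hv : v ∈ SS n (w s), ∀ h : w s = v 0,
        splice s w v h ∈ SS n x) := by
    intro n
    induction n with
    | zero =>
      exact ⟨fun x w hw s => hS3 x w hw s, fun x w hw s v hv h => hS4 x w hw s v hv⟩
    | succ n ih =>
      obtain ⟨ih3, ih4⟩ := ih
      have hexppos : ∀ s : ℝ≥0, (0:ℝ) < Real.exp (-lam n * s) := fun s => Real.exp_pos _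
      constructor
      · intro x w hw s
        rw [hmem_succ] at hw
        obtain ⟨hwn, hwmax⟩ := hw
        rw [hmem_succ]
        refine ⟨ih3 x w hwn s, fun v hv => ?_⟩
        have h0 : w s = v 0 := (hstartn n (w s) v hv).symm
        have hsp := ih4 x w hwn s v hv h0
        have hineq := hwmax _ hsp
        rw [SemiflowAux.zeta_splice (hlampos n) (hphic n) (hphib n) s w v h0] at hineq
        rw [SemiflowAux.zeta_shift (hlampos n) (hphic n) (hphib n) s w] at hineq
        have := (add_le_add_iff_left _).mp hineq
        exact (mul_le_mul_iff_right₀ (hexppos s)).mp this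
      · intro x w hw s v hv h
        rw [hmem_succ] at hw hv
        obtain ⟨hwn, hwmax⟩ := hw
        obtain ⟨hvn, hvmax⟩ := hv
        rw [hmem_succ]
        refine ⟨ih4 x w hwn s v hvn h, fun u' hu' => ?_⟩
        have hθ := ih3 x w hwn s
        calc zeta (lam n) (phi n) u' ≤ zeta (lam n) (phi n) w := hwmax u' hu'
          _ ≤ zeta (lam n) (phi n) (splice s w v h) := by
              rw [SemiflowAux.zeta_shift (hlampos n) (hphic n) (hphib n) s w,
                SemiflowAux.zeta_splice (hlampos n) (hphic n) (hphib n) s w v h]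
              exact add_le_add_right
                ((mul_le_mul_iff_right₀ (hexppos s)).mpr (hvmax _ hθ)) _
  -- LimitClosed helpers
  have hLCclosed : ∀ D : Set (IPath X), IsClosed D → LimitClosed A D :=
    fun D hD i => ⟨D, hD, rfl⟩
  have hLCinter : ∀ C D, LimitClosed A C → IsClosed D → LimitClosed A (C ∩ D) := by
    intro C D hC hD i
    obtain ⟨E, hE, hEq⟩ := hC i
    refine ⟨E ∩ D, hE.inter hD, ?_⟩
    ext w
    constructor
    · rintro ⟨⟨hwC, hwD⟩, hwΩ⟩
      have h1 : w ∈ E ∩ {w : IPath X | range ⇑w ⊆ A i} := by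
        rw [← hEq]; exact ⟨hwC, hwΩ⟩
      exact ⟨⟨h1.1, hwD⟩, hwΩ⟩
    · rintro ⟨⟨hwE, hwD⟩, hwΩ⟩
      have h1 : w ∈ C ∩ {w : IPath X | range ⇑w ⊆ A i} := by
        rw [hEq]; exact ⟨hwE, hwΩ⟩
      exact ⟨⟨h1.1, hwD⟩, hwΩ⟩
  have hKx : ∀ x : X, ∃ K : ℕ, ∀ w ∈ S x, range ⇑w ⊆ A K := by
    intro x
    have hxmem : x ∈ ⋃ i, A i := by rw [hcover]; trivial
    obtain ⟨i, hi⟩ := mem_iUnion.mp hxmem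
    obtain ⟨κ, -, hk2⟩ := hk i
    exact ⟨κ, fun w hw => hk2 x hi w hw⟩
  have hloc : ∀ (C : Set (IPath X)), LimitClosed A C → ∀ x : X,
      ∃ D : Set (IPath X), IsClosed D ∧ S x ∩ C = S x ∩ D := by
    intro C hC x
    obtain ⟨K, hK⟩ := hKx x
    obtain ⟨D, hD, hEq⟩ := hC K
    refine ⟨D, hD, ?_⟩
    ext w
    constructor
    · rintro ⟨hwS, hwC⟩
      have h1 : w ∈ D ∩ {w : IPath X | range ⇑w ⊆ A K} := by
        rw [← hEq]; exact ⟨hwC, hK w hwS⟩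
      exact ⟨hwS, h1.1⟩
    · rintro ⟨hwS, hwD⟩
      have h1 : w ∈ C ∩ {w : IPath X | range ⇑w ⊆ A K} := by
        rw [hEq]; exact ⟨hwD, hK w hwS⟩
      exact ⟨hwS, h1.1⟩
  -- the closed "argmax level set" representation
  set Fn : ℕ → X → Set (IPath X) := fun n => Nat.rec (fun _ => univ)
    (fun n F => fun x => F x ∩ (zeta (lam n) (phi n)) ⁻¹'
      {sSup (zeta (lam n) (phi n) '' SS n x)}) n with hFndef
  have hSF : ∀ n x, SS n x = S x ∩ Fn n x := by
    intro n
    induction n with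
    | zero => exact fun x => (inter_univ (S x)).symm
    | succ n ih =>
      intro x
      have : Fn (n+1) x = Fn n x ∩ (zeta (lam n) (phi n)) ⁻¹'
          {sSup (zeta (lam n) (phi n) '' SS n x)} := rfl
      rw [hSSs n x, this, ← inter_assoc, ← ih x]
  have hFclosed : ∀ n x, IsClosed (Fn n x) := by
    intro n
    induction n with
    | zero => exact fun x => isClosed_univ
    | succ n ih => exact fun x => (ih x).inter (isClosed_singleton.preimage (hzc n))
  have hFanti : ∀ x m m', m ≤ m' → Fn m' x ⊆ Fn m x := by
    intro x m m' h
    induction m', h using Nat.le_induction with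
    | base => exact subset_rfl
    | succ m' hm ih => exact subset_trans inter_subset_left ih
  -- nonempty intersections with closed sets
  have hinterne : ∀ (x : X) (D : Set (IPath X)), IsClosed D →
      (∀ n, (SS n x ∩ D).Nonempty) → ((⋂ n, SS n x) ∩ D).Nonempty := by
    intro x D hD hne
    have h1 : (S x ∩ ⋂ n, (Fn n x ∩ D)).Nonempty := by
      refine (hS1b x).inter_iInter_nonempty _ (fun n => (hFclosed n x).inter hD) ?_
      intro t
      obtain ⟨w, hwn, hwD⟩ := hne (t.sup id)
      have hwSF : w ∈ S x ∩ Fn (t.sup id) x := hSF _ x ▸ hwn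
      refine ⟨w, hwSF.1, ?_⟩
      rw [mem_iInter₂]
      intro n hn
      exact ⟨hFanti x n _ (Finset.le_sup (f := id) hn) hwSF.2, hwD⟩
    obtain ⟨w, hwS, hwI⟩ := h1
    rw [mem_iInter] at hwI
    refine ⟨w, mem_iInter.2 fun n => ?_, (hwI 0).2⟩
    rw [hSF n x]
    exact ⟨hwS, (hwI n).1⟩
  -- measurability of the iterates
  have hmeas : ∀ n, ∀ C : Set (IPath X), LimitClosed A C →
      MeasurableSet {x | (SS n x ∩ C).Nonempty} := by
    intro n
    induction n with
    | zero => exact fun C hC => hS2 C hC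
    | succ n ih =>
      intro C hC
      have hset : {x | (SS (n+1) x ∩ C).Nonempty}
          = ⋂ (q : ℚ) (q' : ℚ) (_ : q' < q),
            ({x | (SS n x ∩ {w : IPath X | (q:ℝ) ≤ zeta (lam n) (phi n) w}).Nonempty}ᶜ
              ∪ {x | (SS n x ∩
                  (C ∩ {w : IPath X | (q':ℝ) ≤ zeta (lam n) (phi n) w})).Nonempty}) := by
        ext x
        simp only [mem_setOf_eq, mem_iInter, mem_union, mem_compl_iff]
        constructor
        · rintro ⟨w, hwmem, hwC⟩ q q' hqq'
          rw [hmem_succ] at hwmem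
          obtain ⟨hwn, hwmax⟩ := hwmem
          by_cases hq : (SS n x ∩ {w : IPath X | (q:ℝ) ≤ zeta (lam n) (phi n) w}).Nonempty
          · right
            obtain ⟨v, hvn, hvq⟩ := hq
            refine ⟨w, hwn, hwC, ?_⟩
            have hq'q : (q':ℝ) < (q:ℝ) := by exact_mod_cast hqq'
            exact le_of_lt (lt_of_lt_of_le hq'q (le_trans hvq (hwmax v hvn)))
          · left
            exact hq
        · intro hx
          obtain ⟨w₀, hw₀, hw₀max⟩ :=
            ((hcptne n).1 x).exists_isMaxOn ((hcptne n).2 x) (hzc n).continuousOn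
          obtain ⟨D, hD, hSD⟩ := hloc C hC x
          set c := zeta (lam n) (phi n) w₀ with hcdef
          have hstepm : ∀ m : ℕ,
              (SS n x ∩ (D ∩ {w : IPath X |
                c - 1/((m:ℝ)+1) ≤ zeta (lam n) (phi n) w})).Nonempty := by
            intro m
            have hlt : c - 1/((m:ℝ)+1) < c := by
              have : (0:ℝ) < 1/((m:ℝ)+1) := by positivity
              linarith
            obtain ⟨q', hq'1, hq'2⟩ := exists_rat_btwn hlt
            obtain ⟨q, hq1, hq2⟩ := exists_rat_btwn hq'2
            have hqq' : q' < q := by exact_mod_cast hq1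
            have hE1 : (SS n x ∩
                {w : IPath X | (q:ℝ) ≤ zeta (lam n) (phi n) w}).Nonempty :=
              ⟨w₀, hw₀, le_of_lt hq2⟩
            rcases hx q q' hqq' with hL | hR
            · exact absurd hE1 hL
            · obtain ⟨v, hvn, hvC, hvq'⟩ := hR
              have hvS : v ∈ S x := hsubS n x hvn
              have hvD : v ∈ D := by
                have : v ∈ S x ∩ D := by rw [← hSD]; exact ⟨hvS, hvC⟩
                exact this.2
              exact ⟨v, hvn, hvD, le_trans (le_of_lt hq'1) hvq'⟩
          -- compactness
          have hZclosed : ∀ m : ℕ, IsClosed (Fn n x ∩ (D ∩ {w : IPath X |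
              c - 1/((m:ℝ)+1) ≤ zeta (lam n) (phi n) w})) := fun m =>
            (hFclosed n x).inter (hD.inter (isClosed_le continuous_const (hzc n)))
          have h1 : (S x ∩ ⋂ m : ℕ, (Fn n x ∩ (D ∩ {w : IPath X |
              c - 1/((m:ℝ)+1) ≤ zeta (lam n) (phi n) w}))).Nonempty := by
            refine (hS1b x).inter_iInter_nonempty _ hZclosed ?_
            intro t
            obtain ⟨w, hwn, hwD, hwq⟩ := hstepm (t.sup id)
            have hwSF : w ∈ S x ∩ Fn n x := hSF n x ▸ hwn
            refine ⟨w, hwSF.1, ?_⟩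
            rw [mem_iInter₂]
            intro m hm
            refine ⟨hwSF.2, hwD, ?_⟩
            show c - 1/((m:ℝ)+1) ≤ zeta (lam n) (phi n) w
            have hwq' : c - 1/(((t.sup id : ℕ):ℝ)+1) ≤ zeta (lam n) (phi n) w := hwq
            have hm' : (m:ℝ) + 1 ≤ ((t.sup id : ℕ):ℝ) + 1 := by
              have : (m:ℝ) ≤ ((t.sup id : ℕ):ℝ) := by
                exact_mod_cast Finset.le_sup (f := id) hm
              linarith
            have hdiv : 1/(((t.sup id : ℕ):ℝ)+1) ≤ 1/((m:ℝ)+1) :=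
              one_div_le_one_div_of_le (by positivity) hm'
            linarith
          obtain ⟨w, hwS, hwI⟩ := h1
          rw [mem_iInter] at hwI
          have hwF : w ∈ Fn n x := (hwI 0).1
          have hwD : w ∈ D := (hwI 0).2.1
          have hwSSn : w ∈ SS n x := by rw [hSF n x]; exact ⟨hwS, hwF⟩
          have hwC : w ∈ C := by
            have : w ∈ S x ∩ C := by rw [hSD]; exact ⟨hwS, hwD⟩
            exact this.2
          have hwc : c ≤ zeta (lam n) (phi n) w := by
            refine le_of_forall_pos_le_add ?_
            intro ε hε
            obtain ⟨m, hm⟩ := exists_nat_one_div_lt hε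
            have h3 : c - 1/((m:ℝ)+1) ≤ zeta (lam n) (phi n) w := (hwI m).2.2
            have hm2 : (1:ℝ)/((m:ℝ)+1) < ε := by exact_mod_cast hm
            linarith
          refine ⟨w, ?_, hwC⟩
          rw [hmem_succ]
          exact ⟨hwSSn, fun v hv => le_trans (hw₀max hv) hwc⟩
      rw [hset]
      refine MeasurableSet.iInter fun q => MeasurableSet.iInter fun q' =>
        MeasurableSet.iInter fun _ => ?_
      refine MeasurableSet.union (MeasurableSet.compl (ih _ ?_)) (ih _ ?_)
      · exact hLCclosed _ (isClosed_le continuous_const (hzc n))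
      · exact hLCinter _ _ hC (isClosed_le continuous_const (hzc n))
  -- the limit multimap is a nonempty singleton
  have hTne : ∀ x, ((⋂ n, SS n x) ∩ univ).Nonempty := fun x =>
    hinterne x univ isClosed_univ (fun n => by simpa using (hcptne n).2 x)
  have hTsub : ∀ x, ∀ w ∈ ⋂ n, SS n x, ∀ v ∈ ⋂ n, SS n x, w = v := by
    intro x w hw v hv
    by_contra hne
    have hζeq : ∀ n, zeta (lam n) (phi n) w = zeta (lam n) (phi n) v := by
      intro n
      have hw1 := mem_iInter.mp hw (n+1)
      have hv1 := mem_iInter.mp hv (n+1)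
      rw [hmem_succ] at hw1 hv1
      exact le_antisymm (hv1.2 w hw1.1) (hw1.2 v hv1.1)
    have hex : ∃ t : ℝ≥0, w t ≠ v t := by
      by_contra hcon
      push_neg at hcon
      exact hne (ContinuousMap.ext hcon)
    obtain ⟨t₀, ht₀⟩ := hex
    obtain ⟨m, hm⟩ := hGsep (w t₀) (v t₀) ht₀
    set hfun : ℝ → ℝ :=
      fun t => G m (w (Real.toNNReal t)) - G m (v (Real.toNNReal t)) with hfundef
    have hfc : Continuous hfun := by
      have h1 : Continuous fun t : ℝ => G m (w (Real.toNNReal t)) :=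
        (hGc m).comp (w.continuous.comp continuous_real_toNNReal)
      have h2 : Continuous fun t : ℝ => G m (v (Real.toNNReal t)) :=
        (hGc m).comp (v.continuous.comp continuous_real_toNNReal)
      exact h1.sub h2
    have hfb : ∀ t, |hfun t| ≤ Mb m + Mb m := by
      intro t
      calc |hfun t| ≤ |G m (w (Real.toNNReal t))| + |G m (v (Real.toNNReal t))| :=
            abs_sub _ _
        _ ≤ Mb m + Mb m := add_le_add (hMbb m _) (hMbb m _)
    have hlz : ∀ j : ℕ, ∫ t in Ioi (0:ℝ), Real.exp (-((j:ℝ)+1) * t) * hfun t = 0 := by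
      intro j
      have heq := hζeq (Nat.pair j m)
      have hl : lam (Nat.pair j m) = (j:ℝ)+1 := by
        simp [hlamdef, Nat.unpair_pair]
      have hp : phi (Nat.pair j m) = G m := by
        simp [hphidef, Nat.unpair_pair]
      rw [hl, hp] at heq
      have hjpos : (0:ℝ) < (j:ℝ)+1 := by positivity
      have hiw : IntegrableOn
          (fun t : ℝ => Real.exp (-((j:ℝ)+1) * t) * G m (w (Real.toNNReal t)))
          (Ioi (0:ℝ)) :=
        SemiflowAux.integrable_aux hjpos ((hGc m).comp w.continuous) (fun t => hMbb m _) 0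
      have hiv : IntegrableOn
          (fun t : ℝ => Real.exp (-((j:ℝ)+1) * t) * G m (v (Real.toNNReal t)))
          (Ioi (0:ℝ)) :=
        SemiflowAux.integrable_aux hjpos ((hGc m).comp v.continuous) (fun t => hMbb m _) 0
      have hkey : ∫ t in Ioi (0:ℝ), Real.exp (-((j:ℝ)+1) * t) * hfun t
          = (∫ t in Ioi (0:ℝ), Real.exp (-((j:ℝ)+1) * t) * G m (w (Real.toNNReal t)))
            - ∫ t in Ioi (0:ℝ), Real.exp (-((j:ℝ)+1) * t) * G m (v (Real.toNNReal t)) := by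
        rw [← integral_sub hiw hiv]
        congr 1
        funext t
        simp only [hfundef]
        ring
      rw [hkey]
      rw [zeta, zeta] at heq
      rw [heq, sub_self]
    have hML : (0:ℝ) ≤ Mb m + Mb m := by linarith [hMb0 m]
    have hzero := SemiflowAux.laplace_eq_zero hfc hfb hlz (t₀ : ℝ) t₀.coe_nonneg
    simp only [hfundef, Real.toNNReal_coe, sub_eq_zero] at hzero
    exact hm hzero
  set u : X → IPath X := fun x => (hTne x).choose with hudef
  have hu : ∀ x, u x ∈ ⋂ n, SS n x := fun x => ((hTne x).choose_spec).1
  have huS : ∀ x, u x ∈ S x := fun x => mem_iInter.mp (hu x) 0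
  have huuniq : ∀ x w, w ∈ (⋂ n, SS n x) → w = u x :=
    fun x w hw => hTsub x w hw (u x) (hu x)
  refine ⟨u, ?_, huS, ?_⟩
  · intro C hC
    have hset : u ⁻¹' C = ⋂ n, {x | (SS n x ∩ C).Nonempty} := by
      ext x
      simp only [mem_preimage, mem_iInter, mem_setOf_eq]
      constructor
      · intro hxC n
        exact ⟨u x, mem_iInter.mp (hu x) n, hxC⟩
      · intro hall
        obtain ⟨D, hD, hSD⟩ := hloc C hC x
        have hall' : ∀ n, (SS n x ∩ D).Nonempty := by
          intro n
          obtain ⟨w, hwn, hwC⟩ := hall n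
          have hwS : w ∈ S x := hsubS n x hwn
          have hwSD : w ∈ S x ∩ D := by rw [← hSD]; exact ⟨hwS, hwC⟩
          exact ⟨w, hwn, hwSD.2⟩
        obtain ⟨w, hwT, hwD⟩ := hinterne x D hD hall'
        have hwS : w ∈ S x := mem_iInter.mp hwT 0
        have hwC : w ∈ S x ∩ C := by rw [hSD]; exact ⟨hwS, hwD⟩
        rw [← huuniq x w hwT]
        exact hwC.2
    rw [hset]
    exact MeasurableSet.iInter fun n => hmeas n C hC
  · intro x t₁ t₂
    have hshift : shift t₁ (u x) ∈ ⋂ n, SS n (u x t₁) :=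
      mem_iInter.2 fun n => (hS34 n).1 x (u x) (mem_iInter.mp (hu x) n) t₁
    have heq := huuniq (u x t₁) _ hshift
    rw [← heq]
    rfl
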